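/- In a multi-follower game where each follower plays a zero-sum game against a minimizing leader, and the maximin strategy f_i of each follower against the fully ambiguous set Δ(A_L) makes the leader indifferent among all its actions (E_{a_F∼f_i}[u_i(a_L,a_F)] = E_{a_F∼f_i}[u_i(a_L',a_F)] for all a_L, a_L'), then committing to full ambiguity P_L = Δ(A_L) is optimal for the leader: it achieves payoff ∑_i maximin_i, and no commitment set P_L achieves a smaller pessimistic payoff. -/
import Mathlib

/-- Expected utility when leader mixes with `p` and follower mixes with `q`. -/
noncomputable def Eu {L F : Type} [Fintype L] [Fintype F]
    (u : L → F → ℝ) (p : L → ℝ) (q : F → ℝ) : ℝ :=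
  ∑ a : L, ∑ b : F, p a * q b * u a b

/-- Worst-case expected utility of follower strategy `q` against the commitment set `P`. -/
noncomputable def worst {L F : Type} [Fintype L] [Fintype F]
    (u : L → F → ℝ) (P : Set (L → ℝ)) (q : F → ℝ) : ℝ :=
  sInf ((fun p => Eu u p q) '' P)

lemma mem_le_one {L : Type} [Fintype L] {p : L → ℝ} (hp : p ∈ stdSimplex ℝ L) (a : L) :
    p a ≤ 1 := by
  calc p a ≤ ∑ x : L, p x := Finset.single_le_sum (fun i _ => hp.1 i) (Finset.mem_univ a)
  _ = 1 := hp.2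

lemma Eu_abs_le {L F : Type} [Fintype L] [Fintype F] (u : L → F → ℝ) {p : L → ℝ} {q : F → ℝ}
    (hp : p ∈ stdSimplex ℝ L) (hq : q ∈ stdSimplex ℝ F) :
    |Eu u p q| ≤ ∑ a : L, ∑ b : F, |u a b| := by
  refine (Finset.abs_sum_le_sum_abs _ _).trans (Finset.sum_le_sum fun a _ => ?_)
  refine (Finset.abs_sum_le_sum_abs _ _).trans (Finset.sum_le_sum fun b _ => ?_)
  rw [abs_mul, abs_mul, abs_of_nonneg (hp.1 a), abs_of_nonneg (hq.1 b)]
  have h1 : p a * q b ≤ 1 := mul_le_one₀ (mem_le_one hp a) (hq.1 b) (mem_le_one hq b)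
  nlinarith [abs_nonneg (u a b), mul_nonneg (hp.1 a) (hq.1 b)]

lemma Eu_const {L F : Type} [Fintype L] [Fintype F] (u : L → F → ℝ) {p : L → ℝ} {q : F → ℝ}
    (hp : p ∈ stdSimplex ℝ L) (a0 : L)
    (h : ∀ a : L, ∑ b : F, q b * u a b = ∑ b : F, q b * u a0 b) :
    Eu u p q = ∑ b : F, q b * u a0 b := by
  unfold Eu
  calc ∑ a : L, ∑ b : F, p a * q b * u a b
      = ∑ a : L, p a * ∑ b : F, q b * u a b := by
        refine Finset.sum_congr rfl fun a _ => ?_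
        rw [Finset.mul_sum]; exact Finset.sum_congr rfl fun b _ => by ring
  _ = ∑ a : L, p a * ∑ b : F, q b * u a0 b := by
        refine Finset.sum_congr rfl fun a _ => by rw [h a]
  _ = (∑ a : L, p a) * ∑ b : F, q b * u a0 b := by rw [Finset.sum_mul]
  _ = _ := by rw [hp.2, one_mul]

/-- If every follower's maximin response to the fully ambiguous commitment `Δ(A_L)` makes
the (minimizing) leader indifferent among all of its pure actions, then full ambiguity is
optimal: its pessimistic payoff is `∑_i maximin_i`, and no other commitment set achieves
a smaller pessimistic payoff. -/
theorem stmt6 {L 𝓕 : Type} [Fintype L] [Nonempty L] [Fintype 𝓕]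
    (AF : 𝓕 → Type) [∀ f, Fintype (AF f)] [∀ f, Nonempty (AF f)]
    (u : (f : 𝓕) → L → AF f → ℝ)
    (br : (f : 𝓕) → Set (L → ℝ) → (AF f → ℝ))
    (hbr : ∀ (f : 𝓕) (P : Set (L → ℝ)), P.Nonempty → P ⊆ stdSimplex ℝ L →
      br f P ∈ stdSimplex ℝ (AF f) ∧
      ∀ q ∈ stdSimplex ℝ (AF f), worst (u f) P q ≤ worst (u f) P (br f P))
    (hindif : ∀ (f : 𝓕) (a a' : L),
      ∑ b : AF f, br f (stdSimplex ℝ L) b * u f a b =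
      ∑ b : AF f, br f (stdSimplex ℝ L) b * u f a' b) :
    sSup ((fun p => ∑ f : 𝓕, Eu (u f) p (br f (stdSimplex ℝ L))) '' stdSimplex ℝ L) =
      (∑ f : 𝓕, sSup ((fun q => worst (u f) (stdSimplex ℝ L) q)
        '' stdSimplex ℝ (AF f))) ∧
    ∀ P : Set (L → ℝ), P.Nonempty → P ⊆ stdSimplex ℝ L →
      sSup ((fun p => ∑ f : 𝓕, Eu (u f) p (br f (stdSimplex ℝ L))) '' stdSimplex ℝ L) ≤
      sSup ((fun p => ∑ f : 𝓕, Eu (u f) p (br f P)) '' P) := by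
  classical
  obtain ⟨a0⟩ := ‹Nonempty L›
  set Δ := stdSimplex ℝ L with hΔ
  have hΔne : Δ.Nonempty := ⟨_, ite_eq_mem_stdSimplex ℝ a0⟩
  set c : 𝓕 → ℝ := fun f => ∑ b : AF f, br f Δ b * u f a0 b with hc
  -- q* facts
  have hqstar : ∀ f, br f Δ ∈ stdSimplex ℝ (AF f) := fun f => (hbr f Δ hΔne le_rfl).1
  have hEuc : ∀ f, ∀ p ∈ Δ, Eu (u f) p (br f Δ) = c f := fun f p hp =>
    Eu_const (u f) hp a0 (fun a => hindif f a a0)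
  -- worst against q* is c f, for any nonempty P ⊆ Δ
  have hworstc : ∀ f (P : Set (L → ℝ)), P.Nonempty → P ⊆ Δ → worst (u f) P (br f Δ) = c f := by
    intro f P hPne hPsub
    have himg : (fun p => Eu (u f) p (br f Δ)) '' P = {c f} := by
      apply Set.Subset.antisymm
      · rintro x ⟨p, hp, rfl⟩
        exact hEuc f p (hPsub hp)
      · rintro x (rfl : x = c f)
        obtain ⟨p, hp⟩ := hPne
        exact ⟨p, hp, hEuc f p (hPsub hp)⟩
    rw [worst, himg, csInf_singleton]
  -- sSup of worst over simplex = c f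
  have hsup : ∀ f, sSup ((fun q => worst (u f) Δ q) '' stdSimplex ℝ (AF f)) = c f := by
    intro f
    apply IsGreatest.csSup_eq
    constructor
    · exact ⟨br f Δ, hqstar f, hworstc f Δ hΔne le_rfl⟩
    · rintro x ⟨q, hq, rfl⟩
      calc worst (u f) Δ q ≤ worst (u f) Δ (br f Δ) := (hbr f Δ hΔne le_rfl).2 q hq
      _ = c f := hworstc f Δ hΔne le_rfl
  -- LHS image is {∑ c f}
  have himgL : (fun p => ∑ f : 𝓕, Eu (u f) p (br f Δ)) '' Δ = {∑ f : 𝓕, c f} := by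
    apply Set.Subset.antisymm
    · rintro x ⟨p, hp, rfl⟩
      exact Finset.sum_congr rfl fun f _ => hEuc f p hp
    · rintro x (rfl : x = _)
      obtain ⟨p, hp⟩ := hΔne
      exact ⟨p, hp, Finset.sum_congr rfl fun f _ => hEuc f p hp⟩
  have hLHS : sSup ((fun p => ∑ f : 𝓕, Eu (u f) p (br f Δ)) '' Δ) = ∑ f : 𝓕, c f := by
    rw [himgL, csSup_singleton]
  constructor
  · rw [hLHS]
    exact Finset.sum_congr rfl fun f _ => (hsup f).symm
  · intro P hPne hPsub
    rw [hLHS]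
    obtain ⟨p0, hp0⟩ := hPne
    -- bound: each Eu (u f) p (br f P) ≥ c f for p ∈ P
    have hkey : ∀ f, ∀ p ∈ P, c f ≤ Eu (u f) p (br f P) := by
      intro f p hp
      have h1 : worst (u f) P (br f Δ) ≤ worst (u f) P (br f P) :=
        (hbr f P ⟨p0, hp0⟩ hPsub).2 _ (hqstar f)
      have h2 : worst (u f) P (br f P) ≤ Eu (u f) p (br f P) := by
        refine csInf_le ?_ ⟨p, hp, rfl⟩
        refine ⟨-(∑ a : L, ∑ b : AF f, |u f a b|), ?_⟩
        rintro x ⟨p', hp', rfl⟩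
        exact neg_le_of_abs_le (Eu_abs_le (u f) (hPsub hp') ((hbr f P ⟨p0, hp0⟩ hPsub).1))
      calc c f = worst (u f) P (br f Δ) := (hworstc f P ⟨p0, hp0⟩ hPsub).symm
      _ ≤ _ := le_trans h1 h2
    have hbdd : BddAbove ((fun p => ∑ f : 𝓕, Eu (u f) p (br f P)) '' P) := by
      refine ⟨∑ f : 𝓕, ∑ a : L, ∑ b : AF f, |u f a b|, ?_⟩
      rintro x ⟨p, hp, rfl⟩
      exact Finset.sum_le_sum fun f _ =>
        le_of_abs_le (Eu_abs_le (u f) (hPsub hp) ((hbr f P ⟨p0, hp0⟩ hPsub).1))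
    calc ∑ f : 𝓕, c f ≤ ∑ f : 𝓕, Eu (u f) p0 (br f P) :=
          Finset.sum_le_sum fun f _ => hkey f p0 hp0
    _ ≤ _ := le_csSup hbdd ⟨p0, hp0, rfl⟩
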